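/- Approximation guarantee of CAST: fix ε > 0, δ ∈ (0,1), a budget k with 0 ≤ k ≤ |P|, assume N is nonempty, and let m = ⌈(|N|² / (2ε²)) · ln(2^{|P|+1} / δ)⌉. Let A be any function assigning to each m-tuple ω = (H_1, …, H_m) of realizations a set A(ω) ⊆ P with |A(ω)| ≤ k such that F̂_m^ω(A(ω)) ≤ 2√|P| · min{F̂_m^ω(S) : S ⊆ P, |S| ≤ k}, where F̂_m^ω(S) = (1/m) Σ_{i=1}^m f_{H_i}(S). Let S* minimize F over all S ⊆ P with |S| ≤ k. Then under the product distribution on m-tuples of realizations, the probability that F(A(ω)) ≤ 2√|P| · F(S*) + ε · (1 + 2√|P|) is at least 1 − 2δ. -/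

import Mathlib

open Finset

/-- A single transmission step along a live edge of `H`, avoiding the removed vertex set `S`. -/
def MintStep {α : Type*} (H : Finset (α × α)) (S : Finset α) (x y : α) : Prop :=
  (x, y) ∈ H ∧ x ∉ S ∧ y ∉ S

/-- `u` is reachable from `v` in `H[V \ S]`: there is a directed path (possibly of length 0)
from `v` to `u` using only edges of `H`, all of whose vertices avoid `S`. -/
def MintReach {α : Type*} (H : Finset (α × α)) (S : Finset α) (v u : α) : Prop :=
  v ∉ S ∧ Relation.ReflTransGen (MintStep H S) v u

/-- The realized MINT objective `f_H(S)`: the number of negative nodes (nodes outside `P`)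
reachable from some untreated positive node (a node of `P \ S`) in `H[V \ S]`. -/
noncomputable def mintf {α : Type*} [DecidableEq α] (P : Finset α) (H : Finset (α × α))
    (S : Finset α) : ℕ :=
  Set.ncard {u : α | u ∉ P ∧ ∃ v ∈ P \ S, MintReach H S v u}

/-- The probability of the live-edge realization `H ⊆ E`. -/
def mintPr {α : Type*} [DecidableEq α] (E : Finset (α × α)) (w : α × α → ℝ)
    (H : Finset (α × α)) : ℝ :=
  (∏ e ∈ H, w e) * ∏ e ∈ E \ H, (1 - w e)

/-- The expected MINT objective `F(S) = Σ_{H ⊆ E} Pr(H) · f_H(S)`. -/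
noncomputable def mintF {α : Type*} [DecidableEq α] (E : Finset (α × α)) (w : α × α → ℝ)
    (P : Finset α) (S : Finset α) : ℝ :=
  ∑ H ∈ E.powerset, mintPr E w H * (mintf P H S : ℝ)



private lemma mint_D_pos {q : ℝ} (hq0 : 0 ≤ q) (hq1 : q ≤ 1) (u : ℝ) :
    0 < 1 - q + q * Real.exp u := by
  rcases eq_or_lt_of_le hq0 with h | h
  · simp [← h]
  · have := Real.exp_pos u
    nlinarith

private lemma mint_key_ineq {q : ℝ} (hq0 : 0 ≤ q) (hq1 : q ≤ 1) (u : ℝ) :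
    1 - q + q * Real.exp u ≤ Real.exp (q * u + u ^ 2 / 8) := by
  set D : ℝ → ℝ := fun x => 1 - q + q * Real.exp x with hDdef
  have hDpos : ∀ x, 0 < D x := mint_D_pos hq0 hq1
  set G : ℝ → ℝ := fun x => q * x + x ^ 2 / 8 - Real.log (D x) with hGdef
  set G' : ℝ → ℝ := fun x => q + x / 4 - q * Real.exp x / D x with hG'def
  have hD' : ∀ x, HasDerivAt D (q * Real.exp x) x := by
    intro x
    exact ((Real.hasDerivAt_exp x).const_mul q).const_add (1 - q)
  have hG : ∀ x, HasDerivAt G (G' x) x := by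
    intro x
    have hlog : HasDerivAt (fun y => Real.log (D y)) (q * Real.exp x / D x) x :=
      (hD' x).log (hDpos x).ne'
    have h1 : HasDerivAt (fun y : ℝ => q * y + y ^ 2 / 8) (q + x / 4) x := by
      have := ((hasDerivAt_pow 2 x).div_const 8).const_add (0 : ℝ)
      have h2 : HasDerivAt (fun y : ℝ => q * y) q x := by
        simpa using (hasDerivAt_id x).const_mul q
      have h3 : HasDerivAt (fun y : ℝ => y ^ 2 / 8) (x / 4) x := by
        have := (hasDerivAt_pow 2 x).div_const 8
        exact this.congr_deriv (by simp; ring)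
      exact h2.add h3
    exact h1.sub hlog
  have hG' : ∀ x, HasDerivAt G' (1 / 4 - q * Real.exp x * (1 - q) / (D x) ^ 2) x := by
    intro x
    have hnum : HasDerivAt (fun y => q * Real.exp y) (q * Real.exp x) x :=
      (Real.hasDerivAt_exp x).const_mul q
    have hdiv : HasDerivAt (fun y => q * Real.exp y / D y)
        ((q * Real.exp x * D x - q * Real.exp x * (q * Real.exp x)) / (D x) ^ 2) x :=
      hnum.div (hD' x) (hDpos x).ne'
    have h1 : HasDerivAt (fun y : ℝ => q + y / 4) (1 / 4) x := by
      simpa using ((hasDerivAt_id x).div_const 4).const_add q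
    have h2 := h1.sub hdiv
    refine h2.congr_deriv ?_
    have : q * Real.exp x * D x - q * Real.exp x * (q * Real.exp x)
        = q * Real.exp x * (1 - q) := by
      simp only [hDdef]; ring
    rw [this]
  have hG'nonneg : ∀ x, 0 ≤ 1 / 4 - q * Real.exp x * (1 - q) / (D x) ^ 2 := by
    intro x
    rw [sub_nonneg, div_le_iff₀ (pow_pos (hDpos x) 2)]
    have : (D x) ^ 2 = ((1 - q) + q * Real.exp x) ^ 2 := by simp [hDdef]
    rw [this]
    nlinarith [sq_nonneg ((1 - q) - q * Real.exp x)]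
  have hmono : Monotone G' := by
    apply monotone_of_deriv_nonneg
    · exact fun x => (hG' x).differentiableAt
    · intro x
      rw [(hG' x).deriv]
      exact hG'nonneg x
  have hG'0 : G' 0 = 0 := by simp [hG'def, hDdef]
  have hGcont : Continuous G := by
    have : Differentiable ℝ G := fun x => (hG x).differentiableAt
    exact this.continuous
  have hG0 : G 0 = 0 := by simp [hGdef, hDdef]
  have hGnonneg : ∀ x, 0 ≤ G x := by
    intro x
    rcases le_total x 0 with hx | hx
    · have hanti : AntitoneOn G (Set.Iic 0) := by
        apply antitoneOn_of_deriv_nonpos (convex_Iic 0) (hGcont.continuousOn)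
        · exact fun y _ => (hG y).differentiableAt.differentiableWithinAt
        · intro y hy
          rw [(hG y).deriv]
          have : G' y ≤ G' 0 := hmono (le_of_lt (by simpa using hy))
          simpa [hG'0] using this
      have := hanti (Set.mem_Iic.2 hx) (Set.mem_Iic.2 le_rfl) hx
      simpa [hG0] using this
    · have hmon : MonotoneOn G (Set.Ici 0) := by
        apply monotoneOn_of_deriv_nonneg (convex_Ici 0) (hGcont.continuousOn)
        · exact fun y _ => (hG y).differentiableAt.differentiableWithinAt
        · intro y hy
          rw [(hG y).deriv]
          have : G' 0 ≤ G' y := hmono (le_of_lt (by simpa using hy))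
          simpa [hG'0] using this
      have := hmon (Set.mem_Ici.2 le_rfl) (Set.mem_Ici.2 hx) hx
      simpa [hG0] using this
  have hlogle : Real.log (D u) ≤ q * u + u ^ 2 / 8 := by
    have := hGnonneg u
    simp only [hGdef, sub_nonneg] at this
    linarith [this]
  calc 1 - q + q * Real.exp u = Real.exp (Real.log (D u)) := by
        rw [Real.exp_log (hDpos u)]
      _ ≤ Real.exp (q * u + u ^ 2 / 8) := Real.exp_le_exp.2 hlogle

private lemma mint_mgf_bound {ι : Type*} (Ω : Finset ι) (p g : ι → ℝ) {B : ℝ} (hB : 0 < B)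
    (hp0 : ∀ x ∈ Ω, 0 ≤ p x) (hp1 : ∑ x ∈ Ω, p x = 1)
    (hg : ∀ x ∈ Ω, g x ∈ Set.Icc 0 B) (t : ℝ) :
    ∑ x ∈ Ω, p x * Real.exp (t * g x) ≤
      Real.exp (t * (∑ x ∈ Ω, p x * g x) + t ^ 2 * B ^ 2 / 8) := by
  set μ := ∑ x ∈ Ω, p x * g x with hμ
  have hμ0 : 0 ≤ μ := Finset.sum_nonneg fun x hx =>
    mul_nonneg (hp0 x hx) (hg x hx).1
  have hμB : μ ≤ B := by
    calc μ ≤ ∑ x ∈ Ω, p x * B := Finset.sum_le_sum fun x hx =>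
          mul_le_mul_of_nonneg_left (hg x hx).2 (hp0 x hx)
      _ = B := by rw [← Finset.sum_mul, hp1, one_mul]
  set c := Real.exp (t * B) with hc
  have step1' : ∀ x ∈ Ω, Real.exp (t * g x) ≤ (1 - g x / B) + g x / B * c := by
    intro x hx
    have hs0 : 0 ≤ g x / B := div_nonneg (hg x hx).1 hB.le
    have hs1 : g x / B ≤ 1 := (div_le_one hB).2 (hg x hx).2
    have := convexOn_exp.2 (Set.mem_univ (0 : ℝ)) (Set.mem_univ (t * B))
      (by linarith : (0:ℝ) ≤ 1 - g x / B) hs0 (by ring)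
    simp only [smul_eq_mul, mul_zero, zero_add, Real.exp_zero, mul_one] at this
    have harg : g x / B * (t * B) = t * g x := by field_simp
    rw [harg] at this
    linarith [this]
  have step2 : ∑ x ∈ Ω, p x * Real.exp (t * g x) ≤ 1 - μ / B + μ / B * c := by
    calc ∑ x ∈ Ω, p x * Real.exp (t * g x)
        ≤ ∑ x ∈ Ω, p x * ((1 - g x / B) + g x / B * c) :=
          Finset.sum_le_sum fun x hx =>
            mul_le_mul_of_nonneg_left (step1' x hx) (hp0 x hx)
      _ = ∑ x ∈ Ω, (p x + p x * g x * ((c - 1) / B)) := by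
          apply Finset.sum_congr rfl
          intro x hx
          field_simp
          ring
      _ = 1 + μ * ((c - 1) / B) := by
          rw [Finset.sum_add_distrib, hp1, ← Finset.sum_mul]
      _ = 1 - μ / B + μ / B * c := by field_simp; ring
  have step3 : 1 - μ / B + μ / B * c ≤ Real.exp (t * μ + t ^ 2 * B ^ 2 / 8) := by
    have h := mint_key_ineq (q := μ / B) (div_nonneg hμ0 hB.le) ((div_le_one hB).2 hμB) (t * B)
    have harg : μ / B * (t * B) + (t * B) ^ 2 / 8 = t * μ + t ^ 2 * B ^ 2 / 8 := by
      field_simp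
    rw [harg] at h
    exact h
  linarith

private lemma mint_chernoff {ι : Type*} (Ω : Finset ι) (p g : ι → ℝ) {B : ℝ} (hB : 0 < B)
    (hp0 : ∀ x ∈ Ω, 0 ≤ p x) (hp1 : ∑ x ∈ Ω, p x = 1)
    (hg : ∀ x ∈ Ω, g x ∈ Set.Icc 0 B) {ε : ℝ} (hε : 0 < ε) (m : ℕ)
    (pred : (Fin m → ι) → Prop) [DecidablePred pred]
    (hpred : ∀ ω, pred ω → (m : ℝ) * ((∑ x ∈ Ω, p x * g x) + ε) ≤ ∑ i, g (ω i)) :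
    ∑ ω ∈ (Fintype.piFinset fun _ : Fin m => Ω).filter pred, ∏ i, p (ω i)
      ≤ Real.exp (-(2 * m * ε ^ 2 / B ^ 2)) := by
  set μ := ∑ x ∈ Ω, p x * g x with hμ
  set t : ℝ := 4 * ε / B ^ 2 with ht
  have htpos : 0 < t := by positivity
  have key : ∀ ω ∈ (Fintype.piFinset fun _ : Fin m => Ω).filter pred,
      ∏ i, p (ω i) ≤ (∏ i, p (ω i) * Real.exp (t * g (ω i))) * Real.exp (-(t * m * (μ + ε))) := by
    intro ω hω
    rw [Finset.mem_filter] at hω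
    have hmem := hω.1
    have hev := hpred ω hω.2
    have hWnn : 0 ≤ ∏ i, p (ω i) := Finset.prod_nonneg fun i _ =>
      hp0 _ (Fintype.mem_piFinset.1 hmem i)
    have : (∏ i, p (ω i) * Real.exp (t * g (ω i)))
        = (∏ i, p (ω i)) * Real.exp (t * ∑ i, g (ω i)) := by
      rw [Finset.prod_mul_distrib, ← Real.exp_sum]
      congr 1
      rw [Finset.mul_sum]
    rw [this, mul_assoc, ← Real.exp_add]
    nth_rewrite 1 [← mul_one (∏ i, p (ω i))]
    apply mul_le_mul_of_nonneg_left _ hWnn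
    rw [← Real.exp_zero]
    apply Real.exp_le_exp.2
    nlinarith
  have step : ∑ ω ∈ (Fintype.piFinset fun _ : Fin m => Ω).filter pred, ∏ i, p (ω i)
      ≤ ∑ ω ∈ Fintype.piFinset fun _ : Fin m => Ω,
          (∏ i, p (ω i) * Real.exp (t * g (ω i))) * Real.exp (-(t * m * (μ + ε))) := by
    calc ∑ ω ∈ (Fintype.piFinset fun _ : Fin m => Ω).filter pred, ∏ i, p (ω i)
        ≤ ∑ ω ∈ (Fintype.piFinset fun _ : Fin m => Ω).filter pred,
            (∏ i, p (ω i) * Real.exp (t * g (ω i))) * Real.exp (-(t * m * (μ + ε))) :=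
          Finset.sum_le_sum key
      _ ≤ _ := by
          apply Finset.sum_le_sum_of_subset_of_nonneg (Finset.filter_subset _ _)
          intro ω hω _
          apply mul_nonneg _ (Real.exp_pos _).le
          exact Finset.prod_nonneg fun i _ => mul_nonneg
            (hp0 _ (Fintype.mem_piFinset.1 hω i)) (Real.exp_pos _).le
  have prodeq : ∑ ω ∈ Fintype.piFinset fun _ : Fin m => Ω,
      ∏ i, p (ω i) * Real.exp (t * g (ω i))
      = (∑ x ∈ Ω, p x * Real.exp (t * g x)) ^ m := by
    rw [Finset.sum_pow']
  have hcnn : 0 ≤ ∑ x ∈ Ω, p x * Real.exp (t * g x) :=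
    Finset.sum_nonneg fun x hx => mul_nonneg (hp0 x hx) (Real.exp_pos _).le
  have hmgf := mint_mgf_bound Ω p g hB hp0 hp1 hg t
  calc ∑ ω ∈ (Fintype.piFinset fun _ : Fin m => Ω).filter pred, ∏ i, p (ω i)
      ≤ ∑ ω ∈ Fintype.piFinset fun _ : Fin m => Ω,
          (∏ i, p (ω i) * Real.exp (t * g (ω i))) * Real.exp (-(t * m * (μ + ε))) := step
    _ = (∑ x ∈ Ω, p x * Real.exp (t * g x)) ^ m * Real.exp (-(t * m * (μ + ε))) := by
        rw [← Finset.sum_mul, prodeq]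
    _ ≤ (Real.exp (t * μ + t ^ 2 * B ^ 2 / 8)) ^ m * Real.exp (-(t * m * (μ + ε))) := by
        apply mul_le_mul_of_nonneg_right _ (Real.exp_pos _).le
        exact pow_le_pow_left₀ hcnn hmgf m
    _ = Real.exp ((m : ℝ) * (t * μ + t ^ 2 * B ^ 2 / 8) + -(t * m * (μ + ε))) := by
        rw [← Real.exp_nat_mul, ← Real.exp_add]
    _ ≤ Real.exp (-(2 * m * ε ^ 2 / B ^ 2)) := by
        apply Real.exp_le_exp.2
        have : (m : ℝ) * (t * μ + t ^ 2 * B ^ 2 / 8) + -(t * m * (μ + ε))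
            = (m : ℝ) * (t ^ 2 * B ^ 2 / 8 - t * ε) := by ring
        rw [this, ht]
        have hB2 : B ^ 2 ≠ 0 := by positivity
        have : (4 * ε / B ^ 2) ^ 2 * B ^ 2 / 8 - 4 * ε / B ^ 2 * ε
            = -(2 * ε ^ 2 / B ^ 2) := by field_simp; ring
        rw [this]
        ring_nf
        exact le_refl _


private lemma mint_sum_union_le {κ : Type*} [DecidableEq κ]
    (s t : Finset κ) (f : κ → ℝ) (hf : ∀ x ∈ s ∩ t, 0 ≤ f x) :
    ∑ x ∈ s ∪ t, f x ≤ ∑ x ∈ s, f x + ∑ x ∈ t, f x := by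
  have h1 : ∑ x ∈ s ∪ t, f x + ∑ x ∈ s ∩ t, f x = ∑ x ∈ s, f x + ∑ x ∈ t, f x :=
    Finset.sum_union_inter
  have hnn : 0 ≤ ∑ x ∈ s ∩ t, f x := Finset.sum_nonneg hf
  linarith

private lemma mint_sum_biUnion_le {ι κ : Type*} [DecidableEq κ]
    (s : Finset ι) (t : ι → Finset κ) (f : κ → ℝ)
    (hf : ∀ i ∈ s, ∀ x ∈ t i, 0 ≤ f x) :
    ∑ x ∈ s.biUnion t, f x ≤ ∑ i ∈ s, ∑ x ∈ t i, f x := by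
  classical
  induction s using Finset.induction_on with
  | empty => simp
  | @insert a s ha ih =>
    rw [Finset.biUnion_insert, Finset.sum_insert ha]
    have h1 := mint_sum_union_le (t a) (s.biUnion t) f
      (fun x hx => hf a (Finset.mem_insert_self a s) x (Finset.mem_of_mem_inter_left hx))
    have h2 := ih (fun i hi x hx => hf i (Finset.mem_insert_of_mem hi) x hx)
    linarith

open Classical in
set_option maxHeartbeats 2000000 in
/-- Approximation guarantee of CAST: if `A` maps each `m`-tuple `ω` of realizations to a
feasible set `A(ω) ⊆ P`, `|A(ω)| ≤ k`, with
`F̂_m^ω(A(ω)) ≤ 2√|P| · min {F̂_m^ω(S) : S ⊆ P, |S| ≤ k}`, and `S*` minimizes `F` over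
feasible sets, then with probability at least `1 - 2δ` over the `m` independent draws,
`F(A(ω)) ≤ 2√|P| · F(S*) + ε · (1 + 2√|P|)`. -/
theorem stmt12 {α : Type*} [Fintype α] [DecidableEq α] (E : Finset (α × α))
    (w : α × α → ℝ) (hw : ∀ e ∈ E, 0 ≤ w e ∧ w e ≤ 1)
    (P : Finset α) (hinc : ∀ e ∈ E, e.2 ∉ P) (hN : (Pᶜ : Finset α).Nonempty)
    (ε δ : ℝ) (hε : 0 < ε) (hδ0 : 0 < δ) (hδ1 : δ < 1)
    (k : ℕ) (hk : k ≤ P.card)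
    (m : ℕ)
    (hm : m = ⌈((Pᶜ.card : ℝ) ^ 2 / (2 * ε ^ 2)) * Real.log ((2 : ℝ) ^ (P.card + 1) / δ)⌉₊)
    (A : (Fin m → Finset (α × α)) → Finset α)
    (hA1 : ∀ ω, A ω ⊆ P) (hA2 : ∀ ω, (A ω).card ≤ k)
    (hA3 : ∀ ω ∈ Fintype.piFinset fun _ : Fin m => E.powerset,
      (1 / (m : ℝ)) * ∑ i : Fin m, (mintf P (ω i) (A ω) : ℝ) ≤
        2 * Real.sqrt P.card *
          sInf {x : ℝ | ∃ S ⊆ P, S.card ≤ k ∧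
            x = (1 / (m : ℝ)) * ∑ i : Fin m, (mintf P (ω i) S : ℝ)})
    (Sstar : Finset α) (hS1 : Sstar ⊆ P) (hS2 : Sstar.card ≤ k)
    (hS3 : ∀ S ⊆ P, S.card ≤ k → mintF E w P Sstar ≤ mintF E w P S) :
    1 - 2 * δ ≤
      ∑ ω ∈ (Fintype.piFinset fun _ : Fin m => E.powerset).filter
          (fun ω : Fin m → Finset (α × α) =>
            mintF E w P (A ω) ≤ 2 * Real.sqrt P.card * mintF E w P Sstar
              + ε * (1 + 2 * Real.sqrt P.card)),
        ∏ i : Fin m, mintPr E w (ω i) := by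
  classical
  have hB0 : (0:ℝ) < (Pᶜ.card : ℝ) := by
    have := Finset.card_pos.2 hN
    exact_mod_cast this
  have hp0 : ∀ H ∈ E.powerset, 0 ≤ mintPr E w H := by
    intro H hH
    rw [Finset.mem_powerset] at hH
    exact mul_nonneg (Finset.prod_nonneg fun e he => (hw e (hH he)).1)
      (Finset.prod_nonneg fun e he => by
        have := (hw e (Finset.mem_sdiff.1 he).1).2; linarith)
  have hp1 : ∑ H ∈ E.powerset, mintPr E w H = 1 := by
    have h := Finset.prod_add w (fun e => 1 - w e) E
    simp only [mintPr]
    rw [← h]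
    simp
  have hgmem : ∀ (S : Finset α) (H : Finset (α × α)),
      ((mintf P H S : ℝ)) ∈ Set.Icc (0:ℝ) ((Pᶜ.card : ℝ)) := by
    intro S H
    constructor
    · exact Nat.cast_nonneg _
    · have hsub : {u : α | u ∉ P ∧ ∃ v ∈ P \ S, MintReach H S v u} ⊆ (↑(Pᶜ) : Set α) := by
        intro u hu
        simp only [Finset.coe_compl, Set.mem_compl_iff, Finset.mem_coe]
        exact hu.1
      have h2 := Set.ncard_le_ncard hsub (Pᶜ.finite_toSet)
      rw [Set.ncard_coe_finset] at h2
      have : mintf P H S ≤ Pᶜ.card := h2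
      exact_mod_cast this
  have hm1 : 0 < m := by
    rw [hm]
    apply Nat.ceil_pos.2
    apply mul_pos
    · exact div_pos (pow_pos hB0 2) (by positivity)
    · apply Real.log_pos
      rw [lt_div_iff₀ hδ0, one_mul]
      calc δ < 1 := hδ1
        _ ≤ 2 ^ (P.card + 1) := one_le_pow₀ (by norm_num)
  have hmR : (0:ℝ) < (m:ℝ) := by exact_mod_cast hm1
  have h2c : (0:ℝ) < 2 ^ (P.card + 1) := by positivity
  have hexp : Real.exp (-(2 * m * ε ^ 2 / (Pᶜ.card : ℝ) ^ 2)) ≤ δ / 2 ^ (P.card + 1) := by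
    have hle : ((Pᶜ.card : ℝ) ^ 2 / (2 * ε ^ 2)) * Real.log ((2:ℝ) ^ (P.card + 1) / δ)
        ≤ (m : ℝ) := by
      rw [hm]; exact Nat.le_ceil _
    have hlog2 : Real.log ((2:ℝ) ^ (P.card+1) / δ) ≤ 2 * m * ε ^ 2 / (Pᶜ.card : ℝ) ^ 2 := by
      rw [div_mul_eq_mul_div, div_le_iff₀ (by positivity : (0:ℝ) < 2 * ε ^ 2)] at hle
      rw [le_div_iff₀ (pow_pos hB0 2)]
      nlinarith [hle]
    have h4 : Real.exp (-(Real.log ((2:ℝ) ^ (P.card+1) / δ))) = δ / 2 ^ (P.card + 1) := by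
      rw [Real.exp_neg, Real.exp_log (div_pos h2c hδ0), inv_div]
    have h3 : Real.exp (-(2*m*ε^2/(Pᶜ.card : ℝ)^2))
        ≤ Real.exp (-(Real.log ((2:ℝ)^(P.card+1)/δ))) :=
      Real.exp_le_exp.2 (neg_le_neg hlog2)
    rwa [h4] at h3
  set Ωm := Fintype.piFinset fun _ : Fin m => E.powerset with hΩm
  set W : (Fin m → Finset (α × α)) → ℝ := fun ω => ∏ i : Fin m, mintPr E w (ω i) with hWdef
  have hWnn : ∀ ω ∈ Ωm, 0 ≤ W ω := fun ω hω =>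
    Finset.prod_nonneg fun i _ => hp0 _ (Fintype.mem_piFinset.1 hω i)
  have htot : ∑ ω ∈ Ωm, W ω = 1 := by
    have h := Finset.sum_pow' E.powerset (mintPr E w) m
    rw [hp1, one_pow] at h
    exact h.symm
  have hFdef : ∀ S : Finset α, mintF E w P S
      = ∑ H ∈ E.powerset, mintPr E w H * (mintf P H S : ℝ) := fun S => rfl
  set Up : Finset α → Finset (Fin m → Finset (α × α)) := fun S =>
    Ωm.filter (fun ω => (m:ℝ) * (mintF E w P S + ε) ≤ ∑ i, (mintf P (ω i) S : ℝ))
    with hUpdef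
  set Lo : Finset α → Finset (Fin m → Finset (α × α)) := fun S =>
    Ωm.filter (fun ω =>
      (m:ℝ) * ((∑ H ∈ E.powerset, mintPr E w H * ((Pᶜ.card : ℝ) - (mintf P H S : ℝ))) + ε)
        ≤ ∑ i, ((Pᶜ.card : ℝ) - (mintf P (ω i) S : ℝ))) with hLodef
  have hUpBound : ∀ S : Finset α,
      ∑ ω ∈ Up S, W ω ≤ Real.exp (-(2 * m * ε ^ 2 / (Pᶜ.card : ℝ) ^ 2)) := by
    intro S
    rw [hUpdef, hWdef, hΩm]
    exact mint_chernoff E.powerset (mintPr E w) (fun H => (mintf P H S : ℝ)) hB0 hp0 hp1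
      (fun H _ => hgmem S H) hε m _
      (fun ω h => by rw [← hFdef S]; exact h)
  have hLoBound : ∀ S : Finset α,
      ∑ ω ∈ Lo S, W ω ≤ Real.exp (-(2 * m * ε ^ 2 / (Pᶜ.card : ℝ) ^ 2)) := by
    intro S
    rw [hLodef, hWdef, hΩm]
    exact mint_chernoff E.powerset (mintPr E w)
      (fun H => (Pᶜ.card : ℝ) - (mintf P H S : ℝ)) hB0 hp0 hp1
      (fun H _ => by
        simp only [Set.mem_Icc]
        constructor
        · linarith [(hgmem S H).2]
        · linarith [(hgmem S H).1]) hε m _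
      (fun ω h => h)
  have hUpsub : ∀ S, Up S ⊆ Ωm := fun S => by rw [hUpdef]; exact Finset.filter_subset _ _
  have hLosub : ∀ S, Lo S ⊆ Ωm := fun S => by rw [hLodef]; exact Finset.filter_subset _ _
  have hμ' : ∀ S : Finset α,
      ∑ H ∈ E.powerset, mintPr E w H * ((Pᶜ.card : ℝ) - (mintf P H S : ℝ))
        = (Pᶜ.card : ℝ) - mintF E w P S := by
    intro S
    rw [hFdef S]
    simp only [mul_sub]
    rw [Finset.sum_sub_distrib, ← Finset.sum_mul, hp1, one_mul]
  set GoodP : (Fin m → Finset (α × α)) → Prop := fun ω =>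
    ∀ S ∈ P.powerset,
      |(1 / (m:ℝ)) * (∑ i, (mintf P (ω i) S : ℝ)) - mintF E w P S| ≤ ε with hGoodP
  have hsub : Ωm.filter (fun ω => ¬ GoodP ω)
      ⊆ P.powerset.biUnion (fun S => Up S ∪ Lo S) := by
    intro ω hω
    rw [Finset.mem_filter] at hω
    obtain ⟨hωm, hbad⟩ := hω
    have hbad' : ∃ S ∈ P.powerset,
        ε < |(1 / (m:ℝ)) * (∑ i, (mintf P (ω i) S : ℝ)) - mintF E w P S| := by
      by_contra hcon
      push_neg at hcon
      exact hbad hcon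
    obtain ⟨S, hS, habs⟩ := hbad'
    rw [Finset.mem_biUnion]
    refine ⟨S, hS, ?_⟩
    rw [Finset.mem_union]
    rcases lt_abs.1 habs with h | h
    · left
      rw [hUpdef]
      rw [Finset.mem_filter]
      refine ⟨hωm, ?_⟩
      have heq : (m:ℝ) * ((1/(m:ℝ)) * (∑ i, (mintf P (ω i) S : ℝ)))
          = ∑ i, (mintf P (ω i) S : ℝ) := by
        field_simp
      have h2 : (m:ℝ) * (mintF E w P S + ε)
          < (m:ℝ) * ((1/(m:ℝ)) * (∑ i, (mintf P (ω i) S : ℝ))) :=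
        mul_lt_mul_of_pos_left (by linarith) hmR
      rw [heq] at h2
      exact le_of_lt h2
    · right
      rw [hLodef]
      rw [Finset.mem_filter]
      refine ⟨hωm, ?_⟩
      rw [hμ' S]
      have hrhs : ∑ i : Fin m, ((Pᶜ.card : ℝ) - (mintf P (ω i) S : ℝ))
          = (m:ℝ) * (Pᶜ.card : ℝ) - ∑ i, (mintf P (ω i) S : ℝ) := by
        rw [Finset.sum_sub_distrib, Finset.sum_const, Finset.card_univ, Fintype.card_fin,
          nsmul_eq_mul]
      rw [hrhs]
      have h1 : (1/(m:ℝ)) * (∑ i, (mintf P (ω i) S : ℝ)) < mintF E w P S - ε := by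
        linarith
      have heq : (m:ℝ) * ((1/(m:ℝ)) * (∑ i, (mintf P (ω i) S : ℝ)))
          = ∑ i, (mintf P (ω i) S : ℝ) := by field_simp
      have h2 : (m:ℝ) * ((1/(m:ℝ)) * (∑ i, (mintf P (ω i) S : ℝ)))
          < (m:ℝ) * (mintF E w P S - ε) := mul_lt_mul_of_pos_left h1 hmR
      rw [heq] at h2
      nlinarith
  have hmemΩm : ∀ ω ∈ P.powerset.biUnion (fun S => Up S ∪ Lo S), ω ∈ Ωm := by
    intro ω hω
    rw [Finset.mem_biUnion] at hω
    obtain ⟨S, _, h⟩ := hω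
    rcases Finset.mem_union.1 h with h | h
    · exact hUpsub S h
    · exact hLosub S h
  have hbad_le : ∑ ω ∈ Ωm.filter (fun ω => ¬ GoodP ω), W ω ≤ δ := by
    have h1 : ∑ ω ∈ Ωm.filter (fun ω => ¬ GoodP ω), W ω
        ≤ ∑ ω ∈ P.powerset.biUnion (fun S => Up S ∪ Lo S), W ω :=
      Finset.sum_le_sum_of_subset_of_nonneg hsub (fun ω hω _ => hWnn ω (hmemΩm ω hω))
    have h2 := mint_sum_biUnion_le P.powerset (fun S => Up S ∪ Lo S) W
      (fun S hS ω hω => hWnn ω (hmemΩm ω (Finset.mem_biUnion.2 ⟨S, hS, hω⟩)))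
    have h3 : ∀ S ∈ P.powerset,
        ∑ ω ∈ Up S ∪ Lo S, W ω ≤ 2 * Real.exp (-(2 * m * ε ^ 2 / (Pᶜ.card : ℝ) ^ 2)) := by
      intro S hS
      have hu := mint_sum_union_le (Up S) (Lo S) W
        (fun ω hω => hWnn ω (hUpsub S (Finset.mem_of_mem_inter_left hω)))
      have hub := hUpBound S
      have hlb := hLoBound S
      linarith
    have h4 : ∑ S ∈ P.powerset, ∑ ω ∈ Up S ∪ Lo S, W ω
        ≤ ∑ _S ∈ P.powerset, 2 * Real.exp (-(2 * m * ε ^ 2 / (Pᶜ.card : ℝ) ^ 2)) :=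
      Finset.sum_le_sum h3
    have h5 : ∑ _S ∈ P.powerset, 2 * Real.exp (-(2 * m * ε ^ 2 / (Pᶜ.card : ℝ) ^ 2))
        = (2:ℝ) ^ P.card * (2 * Real.exp (-(2 * m * ε ^ 2 / (Pᶜ.card : ℝ) ^ 2))) := by
      rw [Finset.sum_const, Finset.card_powerset, nsmul_eq_mul]
      push_cast
      ring
    have h6 : (2:ℝ) ^ P.card * (2 * Real.exp (-(2 * m * ε ^ 2 / (Pᶜ.card : ℝ) ^ 2)))
        ≤ (2:ℝ) ^ P.card * (2 * (δ / 2 ^ (P.card + 1))) := by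
      apply mul_le_mul_of_nonneg_left _ (by positivity)
      linarith [hexp]
    have h7 : (2:ℝ) ^ P.card * (2 * (δ / 2 ^ (P.card + 1))) = δ := by
      rw [pow_succ]
      field_simp
    linarith
  have hGood_ge : 1 - δ ≤ ∑ ω ∈ Ωm.filter GoodP, W ω := by
    have h := Finset.sum_filter_add_sum_filter_not Ωm GoodP W
    rw [htot] at h
    linarith
  have hkey : ∀ ω ∈ Ωm.filter GoodP,
      mintF E w P (A ω) ≤ 2 * Real.sqrt P.card * mintF E w P Sstar
        + ε * (1 + 2 * Real.sqrt P.card) := by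
    intro ω hω
    rw [Finset.mem_filter] at hω
    obtain ⟨hωm, hgood⟩ := hω
    have hgood' : ∀ S ∈ P.powerset,
        |(1 / (m:ℝ)) * (∑ i, (mintf P (ω i) S : ℝ)) - mintF E w P S| ≤ ε := hgood
    have hA := hA3 ω hωm
    have hsqrt : (0:ℝ) ≤ 2 * Real.sqrt P.card := by positivity
    have hmemX : ((1/(m:ℝ)) * ∑ i, (mintf P (ω i) Sstar : ℝ)) ∈
        {x : ℝ | ∃ S ⊆ P, S.card ≤ k ∧
          x = (1 / (m : ℝ)) * ∑ i : Fin m, (mintf P (ω i) S : ℝ)} :=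
      ⟨Sstar, hS1, hS2, rfl⟩
    have hbdd : BddBelow {x : ℝ | ∃ S ⊆ P, S.card ≤ k ∧
        x = (1 / (m : ℝ)) * ∑ i : Fin m, (mintf P (ω i) S : ℝ)} := by
      refine ⟨0, fun x hx => ?_⟩
      obtain ⟨S, _, _, rfl⟩ := hx
      have hnn : (0:ℝ) ≤ ∑ i : Fin m, (mintf P (ω i) S : ℝ) :=
        Finset.sum_nonneg fun i _ => Nat.cast_nonneg _
      positivity
    have hinf := csInf_le hbdd hmemX
    have h1 := hgood' (A ω) (Finset.mem_powerset.2 (hA1 ω))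
    have h2 := hgood' Sstar (Finset.mem_powerset.2 hS1)
    rw [abs_le] at h1 h2
    have step2 : (1/(m:ℝ)) * ∑ i, (mintf P (ω i) (A ω) : ℝ)
        ≤ 2 * Real.sqrt P.card * ((1/(m:ℝ)) * ∑ i, (mintf P (ω i) Sstar : ℝ)) :=
      le_trans hA (mul_le_mul_of_nonneg_left hinf hsqrt)
    have step3 : 2 * Real.sqrt P.card * ((1/(m:ℝ)) * ∑ i, (mintf P (ω i) Sstar : ℝ))
        ≤ 2 * Real.sqrt P.card * (mintF E w P Sstar + ε) :=
      mul_le_mul_of_nonneg_left (by linarith [h2.2]) hsqrt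
    nlinarith [step2, step3, h1.1, hsqrt]
  have hsubset : Ωm.filter GoodP
      ⊆ Ωm.filter (fun ω : Fin m → Finset (α × α) =>
            mintF E w P (A ω) ≤ 2 * Real.sqrt P.card * mintF E w P Sstar
              + ε * (1 + 2 * Real.sqrt P.card)) := by
    intro ω hω
    rw [Finset.mem_filter]
    exact ⟨(Finset.mem_filter.1 hω).1, hkey ω hω⟩
  have hfinal : ∑ ω ∈ Ωm.filter GoodP, W ω
      ≤ ∑ ω ∈ Ωm.filter (fun ω : Fin m → Finset (α × α) =>
            mintF E w P (A ω) ≤ 2 * Real.sqrt P.card * mintF E w P Sstar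
              + ε * (1 + 2 * Real.sqrt P.card)), W ω :=
    Finset.sum_le_sum_of_subset_of_nonneg hsubset
      (fun ω hω _ => hWnn ω (Finset.mem_filter.1 hω).1)
  linarith
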